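/- In a two-player zero-sum limited-perception game that is maximin-attainable for the first player, any maximin strategy x* (maximizing h₁(x) = min_k P⁻(u₁,c₁,x,e_k)) satisfies x* ∈ argmax_x g_R(x) for every best response function R, i.e., (x*, y*) is a Stackelberg equilibrium for any y* minimizing y ↦ P⁺(u₂,c₂,x*,y); consequently, by the ordering V_h ≤ V_n ≤ V_s, every Nash value of the first player equals the maximin value V_h. -/

import Mathlib

variable {U : Type*}

/-- Capability path independence for finite positive capability levels. -/
def PathIndep (P : U → ℕ∞ → U) : Prop :=
  ∀ u : U, ∀ c₁ c₂ : ℕ∞, 1 ≤ c₁ → c₁ ≠ ⊤ → 1 ≤ c₂ → c₂ ≠ ⊤ →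
    P (P u c₁) c₂ = P u (min c₁ c₂)

/-- Perfect perception with infinite capability. -/
def PerfectTop (P : U → ℕ∞ → U) : Prop := ∀ u : U, P u ⊤ = u

/-- The intrinsic capability. -/
noncomputable def kappa (P : U → ℕ∞ → U) (u : U) : ℕ∞ :=
  sInf {c : ℕ∞ | 1 ≤ c ∧ P u c = u}

/-- The payoff concretization function `P⁻¹(v, c)`. -/
def concr (P : U → ℕ∞ → U) (v : U) (c : ℕ∞) : Set U :=
  {u : U | P u (max (kappa P v) c) = v}

/-- The narrow concretization set `N(v, c₁, c₂)`. -/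
def narrowSet (P : U → ℕ∞ → U) (v : U) (c₁ c₂ : ℕ∞) : Set U :=
  {u : U | kappa P u ≤ c₂ ∧ P v (min c₁ c₂) = P u (min c₁ c₂)}

variable {S₁ S₂ : Type*} [Fintype S₁] [Fintype S₂]

/-- The bilinear extension of a two-player payoff function. -/
def pay (u : S₁ → S₂ → ℝ) (x : S₁ → ℝ) (y : S₂ → ℝ) : ℝ :=
  ∑ a, ∑ b, x a * u a b * y b

/-- The lower bound `P⁻(v, c, x, y)` of the expected true payoff. -/
noncomputable def Pm (P : (S₁ → S₂ → ℝ) → ℕ∞ → (S₁ → S₂ → ℝ))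
    (v : S₁ → S₂ → ℝ) (c : ℕ∞) (x : S₁ → ℝ) (y : S₂ → ℝ) : ℝ :=
  sInf {z : ℝ | ∃ w ∈ concr P v c, z = pay w x y}

/-- The upper bound `P⁺(v, c, x, y)` of the expected true payoff. -/
noncomputable def Pp (P : (S₁ → S₂ → ℝ) → ℕ∞ → (S₁ → S₂ → ℝ))
    (v : S₁ → S₂ → ℝ) (c : ℕ∞) (x : S₁ → ℝ) (y : S₂ → ℝ) : ℝ :=
  sSup {z : ℝ | ∃ w ∈ concr P v c, z = pay w x y}

/-- Bounded concretization property of a payoff perception function. -/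
def BoundedConcr (P : (S₁ → S₂ → ℝ) → ℕ∞ → (S₁ → S₂ → ℝ)) : Prop :=
  ∀ v : S₁ → S₂ → ℝ, ∃ b : ℝ, ∀ u : S₁ → S₂ → ℝ, ∀ c : ℕ∞,
    P u c = v → ∀ a bb, |u a bb| ≤ b

/-- Oddness of a payoff perception function (zero-sum compatibility). -/
def OddPerc (P : (S₁ → S₂ → ℝ) → ℕ∞ → (S₁ → S₂ → ℝ)) : Prop :=
  ∀ u c, P (-u) c = - P u c

section MMAAux

variable {U : Type*}

lemma mma_fix_self (P : U → ℕ∞ → U) (hpath : PathIndep P) (u : U) (c c' : ℕ∞)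
    (h1 : 1 ≤ c) (h2 : c ≠ ⊤) (h1' : 1 ≤ c') (h2' : c' ≠ ⊤) (hcc : c ≤ c')
    (hfix : P u c = u) : P u c' = u := by
  have h := hpath u c c' h1 h2 h1' h2'
  rw [hfix] at h
  rw [h, min_eq_left hcc, hfix]

lemma mma_fix_of_kappa_le (P : U → ℕ∞ → U) (hpath : PathIndep P) (u : U) (c : ℕ∞)
    (h1 : 1 ≤ c) (h2 : c ≠ ⊤) (hk : kappa P u ≤ c) : P u c = u := by
  have hlt : kappa P u < c + 1 := (ENat.lt_add_one_iff h2).mpr hk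
  obtain ⟨c₀, hc₀, hlt'⟩ := sInf_lt_iff.mp hlt
  have hc₀le : c₀ ≤ c := (ENat.lt_add_one_iff h2).mp hlt'
  exact mma_fix_self P hpath u c₀ c hc₀.1 (fun h => h2 (top_le_iff.mp (h ▸ hc₀le)))
    h1 h2 hc₀le hc₀.2

variable {S₁ S₂ : Type*} [Fintype S₁] [Fintype S₂]

lemma mma_pay_single [DecidableEq S₂] (w : S₁ → S₂ → ℝ) (x : S₁ → ℝ) (y : S₂ → ℝ) :
    pay w x y = ∑ k, y k * pay w x (Pi.single k 1) := by
  unfold pay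
  have h1 : ∀ k : S₂, ∑ a, ∑ b, x a * w a b * (Pi.single k 1 : S₂ → ℝ) b
      = ∑ a, x a * w a k := by
    intro k
    refine Finset.sum_congr rfl fun a _ => ?_
    simp [Pi.single_apply, Finset.sum_ite_eq', mul_ite]
  have h2 : (∑ k, y k * ∑ a, ∑ b, x a * w a b * (Pi.single k 1 : S₂ → ℝ) b)
      = ∑ k, y k * ∑ a, x a * w a k :=
    Finset.sum_congr rfl fun k _ => by rw [h1 k]
  rw [h2, Finset.sum_comm]
  refine Finset.sum_congr rfl fun b _ => ?_
  rw [Finset.mul_sum]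
  refine Finset.sum_congr rfl fun a _ => by ring

lemma mma_pay_abs_le (w : S₁ → S₂ → ℝ) (x : S₁ → ℝ) (y : S₂ → ℝ) (bnd : ℝ)
    (hw : ∀ a bb, |w a bb| ≤ bnd) (hx : x ∈ stdSimplex ℝ S₁) (hy : y ∈ stdSimplex ℝ S₂) :
    |pay w x y| ≤ bnd := by
  have h1 : |pay w x y| ≤ ∑ a, ∑ b, x a * bnd * y b := by
    refine (Finset.abs_sum_le_sum_abs _ _).trans (Finset.sum_le_sum fun a _ => ?_)
    refine (Finset.abs_sum_le_sum_abs _ _).trans (Finset.sum_le_sum fun b _ => ?_)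
    rw [abs_mul, abs_mul, abs_of_nonneg (hx.1 a), abs_of_nonneg (hy.1 b)]
    exact mul_le_mul_of_nonneg_right
      (mul_le_mul_of_nonneg_left (hw a b) (hx.1 a)) (hy.1 b)
  refine h1.trans_eq ?_
  have h3 : ∀ a, ∑ b, x a * bnd * y b = x a * bnd := by
    intro a; rw [← Finset.mul_sum, hy.2, mul_one]
  rw [Finset.sum_congr rfl fun a _ => h3 a, ← Finset.sum_mul, hx.2, one_mul]

end MMAAux

/-- In a maximin-attainable TZOLP-game, any maximin strategy `x*` of the first
player maximizes the Stackelberg objective `g_R` for every best response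
function `R` (so `(x*, y*)` is a Stackelberg equilibrium for any `y*`
minimizing `y ↦ P⁺(u₂,c₂,x*,y)`), and consequently every Nash value of the
first player equals the maximin value `V_h`. -/
theorem maximin_attainable_equilibrium [Nonempty S₂] [DecidableEq S₂]
    (P : (S₁ → S₂ → ℝ) → ℕ∞ → (S₁ → S₂ → ℝ))
    (hpath : PathIndep P) (htop : PerfectTop P) (hbdd : BoundedConcr P)
    (hodd : OddPerc P)
    (u₁ u₂ : S₁ → S₂ → ℝ) (c₁ c₂ : ℕ∞)
    (hc1 : 1 ≤ c₁) (h12 : c₁ ≤ c₂) (hc2 : c₂ ≠ ⊤)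
    (hu12 : u₁ = P u₂ c₁)
    -- the maximin objective h₁ and maximin value V_h
    (h₁ : (S₁ → ℝ) → ℝ)
    (hh₁ : ∀ x, h₁ x = Finset.univ.inf' Finset.univ_nonempty
      (fun k : S₂ => Pm P u₁ c₁ x (Pi.single k 1)))
    (Vh : ℝ) (hVh : Vh = sSup {z : ℝ | ∃ x ∈ stdSimplex ℝ S₁, z = h₁ x})
    -- the instance is maximin-attainable for the first player
    (hattain : ∀ R : (S₁ → S₂ → ℝ) → (S₁ → ℝ) → (S₂ → ℝ),
      (∀ u' ∈ narrowSet P u₁ c₁ c₂, ∀ x ∈ stdSimplex ℝ S₁,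
        R u' x ∈ stdSimplex ℝ S₂ ∧
          ∀ y ∈ stdSimplex ℝ S₂, Pp P u' c₂ x (R u' x) ≤ Pp P u' c₂ x y) →
      Vh = sSup {z : ℝ | ∃ x ∈ stdSimplex ℝ S₁,
        z = sInf {w : ℝ | ∃ u' ∈ narrowSet P u₁ c₁ c₂,
          w = Pm P u' c₂ x (R u' x)}})
    -- x* is a maximin strategy
    (xs : S₁ → ℝ) (hxs : xs ∈ stdSimplex ℝ S₁)
    (hxsMax : ∀ x ∈ stdSimplex ℝ S₁, h₁ x ≤ h₁ xs) :
    -- x* maximizes the Stackelberg objective of every best response function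
    (∀ R : (S₁ → S₂ → ℝ) → (S₁ → ℝ) → (S₂ → ℝ),
      (∀ u' ∈ narrowSet P u₁ c₁ c₂, ∀ x ∈ stdSimplex ℝ S₁,
        R u' x ∈ stdSimplex ℝ S₂ ∧
          ∀ y ∈ stdSimplex ℝ S₂, Pp P u' c₂ x (R u' x) ≤ Pp P u' c₂ x y) →
      ∀ x ∈ stdSimplex ℝ S₁,
        sInf {w : ℝ | ∃ u' ∈ narrowSet P u₁ c₁ c₂, w = Pm P u' c₂ x (R u' x)}
          ≤ sInf {w : ℝ | ∃ u' ∈ narrowSet P u₁ c₁ c₂, w = Pm P u' c₂ xs (R u' xs)}) ∧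
    -- every Nash value of the first player equals the maximin value V_h
    (∀ (xn : S₁ → ℝ) (Rn : (S₁ → S₂ → ℝ) → (S₂ → ℝ)),
      xn ∈ stdSimplex ℝ S₁ →
      (∀ u' ∈ narrowSet P u₁ c₁ c₂, Rn u' ∈ stdSimplex ℝ S₂ ∧
        ∀ y ∈ stdSimplex ℝ S₂, Pp P u' c₂ xn (Rn u') ≤ Pp P u' c₂ xn y) →
      (∀ x ∈ stdSimplex ℝ S₁,
        sInf {z : ℝ | ∃ u' ∈ narrowSet P u₁ c₁ c₂, z = Pm P u' c₂ x (Rn u')}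
          ≤ sInf {z : ℝ | ∃ u' ∈ narrowSet P u₁ c₁ c₂, z = Pm P u' c₂ xn (Rn u')}) →
      sInf {z : ℝ | ∃ u' ∈ narrowSet P u₁ c₁ c₂, z = Pm P u' c₂ xn (Rn u')} = Vh) := by
  
  classical
  have hc2' : 1 ≤ c₂ := hc1.trans h12
  have hc1t : c₁ ≠ ⊤ := fun h => hc2 (top_le_iff.mp (h ▸ h12))
  have hfix1 : P u₁ c₁ = u₁ := by
    rw [hu12]
    have h := hpath u₂ c₁ c₁ hc1 hc1t hc1 hc1t
    rw [h, min_self]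
  have hk1 : kappa P u₁ ≤ c₁ := sInf_le ⟨hc1, hfix1⟩
  have hNmem : ∀ u', u' ∈ narrowSet P u₁ c₁ c₂ →
      kappa P u' ≤ c₂ ∧ P u₁ c₁ = P u' c₁ := by
    intro u' hu'
    have h : kappa P u' ≤ c₂ ∧ P u₁ (min c₁ c₂) = P u' (min c₁ c₂) := hu'
    rwa [min_eq_left h12] at h
  have hconcr1 : ∀ w, w ∈ concr P u₁ c₁ ↔ P w c₁ = u₁ := by
    intro w
    simp only [concr, Set.mem_setOf_eq, max_eq_right hk1]
  have hconcrN : ∀ u' ∈ narrowSet P u₁ c₁ c₂, ∀ w, w ∈ concr P u' c₂ ↔ P w c₂ = u' := by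
    intro u' hu' w
    simp only [concr, Set.mem_setOf_eq, max_eq_right (hNmem u' hu').1]
  have hselfN : ∀ u' ∈ narrowSet P u₁ c₁ c₂, u' ∈ concr P u' c₂ := by
    intro u' hu'
    rw [hconcrN u' hu']
    exact mma_fix_of_kappa_le P hpath u' c₂ hc2' hc2 (hNmem u' hu').1
  have hu1N : u₁ ∈ narrowSet P u₁ c₁ c₂ := by
    simp only [narrowSet, Set.mem_setOf_eq]
    exact ⟨hk1.trans h12, trivial⟩
  have hsub : ∀ u' ∈ narrowSet P u₁ c₁ c₂, concr P u' c₂ ⊆ concr P u₁ c₁ := by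
    intro u' hu' w hw
    rw [hconcrN u' hu'] at hw
    rw [hconcr1]
    have h := hpath w c₂ c₁ hc2' hc2 hc1 hc1t
    rw [hw, min_eq_right h12] at h
    rw [← h, ← (hNmem u' hu').2]
    exact hfix1
  obtain ⟨b, hb⟩ := hbdd u₁
  have hu1b : ∀ a bb, |u₁ a bb| ≤ b := hb u₁ c₁ hfix1
  have hwb : ∀ w ∈ concr P u₁ c₁, ∀ a bb, |w a bb| ≤ b := by
    intro w hw
    exact hb w c₁ ((hconcr1 w).mp hw)
  have hPmdef : ∀ (v : S₁ → S₂ → ℝ) (c : ℕ∞) (x : S₁ → ℝ) (y : S₂ → ℝ),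
      Pm P v c x y = sInf {z : ℝ | ∃ w ∈ concr P v c, z = pay w x y} :=
    fun _ _ _ _ => rfl
  have hPpdef : ∀ (v : S₁ → S₂ → ℝ) (c : ℕ∞) (x : S₁ → ℝ) (y : S₂ → ℝ),
      Pp P v c x y = sSup {z : ℝ | ∃ w ∈ concr P v c, z = pay w x y} :=
    fun _ _ _ _ => rfl
  have hbdd1 : ∀ x ∈ stdSimplex ℝ S₁, ∀ y ∈ stdSimplex ℝ S₂,
      BddBelow {z : ℝ | ∃ w ∈ concr P u₁ c₁, z = pay w x y} := by
    intro x hx y hy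
    refine ⟨-b, ?_⟩
    rintro z ⟨w, hw, rfl⟩
    exact (abs_le.mp (mma_pay_abs_le w x y b (hwb w hw) hx hy)).1
  have hsubz : ∀ u' ∈ narrowSet P u₁ c₁ c₂, ∀ (x : S₁ → ℝ) (y : S₂ → ℝ),
      {z : ℝ | ∃ w ∈ concr P u' c₂, z = pay w x y}
        ⊆ {z : ℝ | ∃ w ∈ concr P u₁ c₁, z = pay w x y} := by
    intro u' hu' x y
    rintro z ⟨w, hw, rfl⟩
    exact ⟨w, hsub u' hu' hw, rfl⟩
  have hkey0 : ∀ x ∈ stdSimplex ℝ S₁, ∀ y ∈ stdSimplex ℝ S₂, ∀ w ∈ concr P u₁ c₁,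
      h₁ x ≤ pay w x y := by
    intro x hx y hy w hw
    have hk : ∀ k : S₂, h₁ x ≤ pay w x (Pi.single k 1) := by
      intro k
      have h1 : h₁ x ≤ Pm P u₁ c₁ x (Pi.single k 1) := by
        rw [hh₁ x]
        exact Finset.inf'_le _ (Finset.mem_univ k)
      refine h1.trans ?_
      rw [hPmdef]
      exact csInf_le (hbdd1 x hx _ (single_mem_stdSimplex ℝ k)) ⟨w, hw, rfl⟩
    rw [mma_pay_single]
    calc h₁ x = ∑ k : S₂, y k * h₁ x := by rw [← Finset.sum_mul, hy.2, one_mul]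
      _ ≤ ∑ k : S₂, y k * pay w x (Pi.single k 1) :=
        Finset.sum_le_sum fun k _ => mul_le_mul_of_nonneg_left (hk k) (hy.1 k)
  have hkey : ∀ x ∈ stdSimplex ℝ S₁, ∀ u' ∈ narrowSet P u₁ c₁ c₂, ∀ y ∈ stdSimplex ℝ S₂,
      h₁ x ≤ Pm P u' c₂ x y := by
    intro x hx u' hu' y hy
    rw [hPmdef]
    apply le_csInf
    · exact ⟨pay u' x y, u', hselfN u' hu', rfl⟩
    rintro z ⟨w, hw, rfl⟩
    exact hkey0 x hx y hy w (hsub u' hu' hw)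
  have hglow : ∀ (f : (S₁ → S₂ → ℝ) → (S₂ → ℝ)),
      (∀ u' ∈ narrowSet P u₁ c₁ c₂, f u' ∈ stdSimplex ℝ S₂) → ∀ x ∈ stdSimplex ℝ S₁,
      h₁ x ≤ sInf {z : ℝ | ∃ u' ∈ narrowSet P u₁ c₁ c₂, z = Pm P u' c₂ x (f u')} := by
    intro f hf x hx
    apply le_csInf
    · exact ⟨Pm P u₁ c₂ x (f u₁), u₁, hu1N, rfl⟩
    rintro z ⟨u', hu', rfl⟩
    exact hkey x hx u' hu' (f u') (hf u' hu')
  have hgup : ∀ (f : (S₁ → S₂ → ℝ) → (S₂ → ℝ)),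
      (∀ u' ∈ narrowSet P u₁ c₁ c₂, f u' ∈ stdSimplex ℝ S₂) → ∀ x ∈ stdSimplex ℝ S₁,
      sInf {z : ℝ | ∃ u' ∈ narrowSet P u₁ c₁ c₂, z = Pm P u' c₂ x (f u')} ≤ b := by
    intro f hf x hx
    have hbb : BddBelow {z : ℝ | ∃ u' ∈ narrowSet P u₁ c₁ c₂, z = Pm P u' c₂ x (f u')} := by
      refine ⟨h₁ x, ?_⟩
      rintro z ⟨u', hu', rfl⟩
      exact hkey x hx u' hu' (f u') (hf u' hu')
    refine (csInf_le hbb ⟨u₁, hu1N, rfl⟩).trans ?_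
    have h1 : Pm P u₁ c₂ x (f u₁) ≤ pay u₁ x (f u₁) := by
      rw [hPmdef]
      exact csInf_le ((hbdd1 x hx _ (hf u₁ hu1N)).mono (hsubz u₁ hu1N x _))
        ⟨u₁, hselfN u₁ hu1N, rfl⟩
    exact h1.trans (abs_le.mp (mma_pay_abs_le u₁ x (f u₁) b hu1b hx (hf u₁ hu1N))).2
  have hVhub : ∀ z ∈ {z : ℝ | ∃ x ∈ stdSimplex ℝ S₁, z = h₁ x}, z ≤ h₁ xs := by
    rintro z ⟨x, hx, rfl⟩
    exact hxsMax x hx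
  have hVheq : Vh = h₁ xs := by
    rw [hVh]
    exact le_antisymm (csSup_le ⟨h₁ xs, xs, hxs, rfl⟩ hVhub)
      (le_csSup ⟨h₁ xs, hVhub⟩ ⟨xs, hxs, rfl⟩)
  constructor
  · intro R hR x hx
    have hVs := hattain R hR
    have h1 : sInf {w : ℝ | ∃ u' ∈ narrowSet P u₁ c₁ c₂, w = Pm P u' c₂ x (R u' x)} ≤ Vh := by
      rw [hVs]
      refine le_csSup ⟨b, ?_⟩ ⟨x, hx, rfl⟩
      rintro z ⟨x', hx', rfl⟩
      exact hgup (fun u' => R u' x') (fun u' hu' => (hR u' hu' x' hx').1) x' hx'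
    refine h1.trans ?_
    rw [hVheq]
    exact hglow (fun u' => R u' xs) (fun u' hu' => (hR u' hu' xs hxs).1) xs hxs
  · intro xn Rn hxn hRn hmaxn
    have hlow : Vh ≤ sInf {z : ℝ | ∃ u' ∈ narrowSet P u₁ c₁ c₂, z = Pm P u' c₂ xn (Rn u')} := by
      refine le_trans ?_ (hmaxn xs hxs)
      rw [hVheq]
      exact hglow Rn (fun u' hu' => (hRn u' hu').1) xs hxs
    have hexists : ∀ u' ∈ narrowSet P u₁ c₁ c₂, ∀ x ∈ stdSimplex ℝ S₁,
        ∃ y ∈ stdSimplex ℝ S₂, ∀ y' ∈ stdSimplex ℝ S₂,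
          Pp P u' c₂ x y ≤ Pp P u' c₂ x y' := by
      intro u' hu' x hx
      obtain ⟨b', hb'⟩ := hbdd u'
      set B := max b' 0 with hB
      have hB0 : (0:ℝ) ≤ B := le_max_right _ _
      have hwB : ∀ w ∈ concr P u' c₂, ∀ a bb, |w a bb| ≤ B := by
        intro w hw a bb
        exact (hb' w c₂ ((hconcrN u' hu' w).mp hw) a bb).trans (le_max_left _ _)
      have hneS : ∀ y : S₂ → ℝ, ({z : ℝ | ∃ w ∈ concr P u' c₂, z = pay w x y}).Nonempty :=
        fun y => ⟨pay u' x y, u', hselfN u' hu', rfl⟩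
      have hbddS : ∀ y ∈ stdSimplex ℝ S₂,
          BddAbove {z : ℝ | ∃ w ∈ concr P u' c₂, z = pay w x y} := by
        intro y hy
        refine ⟨B, ?_⟩
        rintro z ⟨w, hw, rfl⟩
        exact (abs_le.mp (mma_pay_abs_le w x y B (hwB w hw) hx hy)).2
      set K : ℝ := (Fintype.card S₂ : ℝ) * B with hKdef
      have hK0 : 0 ≤ K := mul_nonneg (Nat.cast_nonneg _) hB0
      have hpayd : ∀ (y y' : S₂ → ℝ), ∀ w ∈ concr P u' c₂,
          pay w x y - pay w x y' ≤ K * dist y y' := by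
        intro y y' w hw
        have heq : pay w x y - pay w x y' = ∑ a, ∑ bb, x a * w a bb * (y bb - y' bb) := by
          unfold pay
          rw [← Finset.sum_sub_distrib]
          refine Finset.sum_congr rfl fun a _ => ?_
          rw [← Finset.sum_sub_distrib]
          exact Finset.sum_congr rfl fun bb _ => by ring
        rw [heq]
        have hterm : ∀ a bb, x a * w a bb * (y bb - y' bb) ≤ x a * B * dist y y' := by
          intro a bb
          refine (le_abs_self _).trans ?_
          rw [abs_mul, abs_mul, abs_of_nonneg (hx.1 a)]
          have h2 : |y bb - y' bb| ≤ dist y y' := by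
            rw [← Real.dist_eq]
            exact dist_le_pi_dist y y' bb
          exact mul_le_mul (mul_le_mul_of_nonneg_left (hwB w hw a bb) (hx.1 a)) h2
            (abs_nonneg _) (mul_nonneg (hx.1 a) hB0)
        calc (∑ a, ∑ bb, x a * w a bb * (y bb - y' bb))
            ≤ ∑ a, ∑ _bb : S₂, x a * B * dist y y' :=
              Finset.sum_le_sum fun a _ => Finset.sum_le_sum fun bb _ => hterm a bb
          _ = K * dist y y' := by
              have h3 : ∀ a : S₁, (∑ _bb : S₂, x a * B * dist y y')
                  = x a * (K * dist y y') := by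
                intro a
                rw [Finset.sum_const, Finset.card_univ, nsmul_eq_mul, hKdef]
                ring
              rw [Finset.sum_congr rfl fun a _ => h3 a, ← Finset.sum_mul, hx.2, one_mul]
      have hflip : ∀ y ∈ stdSimplex ℝ S₂, ∀ y' ∈ stdSimplex ℝ S₂,
          Pp P u' c₂ x y ≤ Pp P u' c₂ x y' + K * dist y y' := by
        intro y hy y' hy'
        rw [hPpdef]
        apply csSup_le (hneS y)
        rintro z ⟨w, hw, rfl⟩
        have h4 : pay w x y' ≤ Pp P u' c₂ x y' := by
          rw [hPpdef]
          exact le_csSup (hbddS y' hy') ⟨w, hw, rfl⟩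
        have h5 := hpayd y y' w hw
        linarith
      have hlip : LipschitzOnWith (Real.toNNReal K) (fun y => Pp P u' c₂ x y)
          (stdSimplex ℝ S₂) := by
        rw [lipschitzOnWith_iff_dist_le_mul]
        intro y hy y' hy'
        rw [Real.coe_toNNReal K hK0, Real.dist_eq, abs_sub_le_iff]
        have hd := dist_comm y y'
        constructor
        · have := hflip y hy y' hy'
          linarith
        · have := hflip y' hy' y hy
          rw [hd]
          linarith
      obtain ⟨y0, hy0, hmin⟩ := (isCompact_stdSimplex ℝ S₂).exists_isMinOn
        ⟨Pi.single (Classical.arbitrary S₂) 1, single_mem_stdSimplex ℝ _⟩ hlip.continuousOn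
      exact ⟨y0, hy0, fun y' hy' => isMinOn_iff.mp hmin y' hy'⟩
    have hexists' : ∀ (u' : S₁ → S₂ → ℝ) (x : S₁ → ℝ), ∃ y : S₂ → ℝ,
        u' ∈ narrowSet P u₁ c₁ c₂ → x ∈ stdSimplex ℝ S₁ →
          y ∈ stdSimplex ℝ S₂ ∧ ∀ y' ∈ stdSimplex ℝ S₂, Pp P u' c₂ x y ≤ Pp P u' c₂ x y' := by
      intro u' x
      by_cases h : u' ∈ narrowSet P u₁ c₁ c₂ ∧ x ∈ stdSimplex ℝ S₁
      · obtain ⟨y, hy1, hy2⟩ := hexists u' h.1 x h.2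
        exact ⟨y, fun _ _ => ⟨hy1, hy2⟩⟩
      · exact ⟨0, fun h1 h2 => absurd ⟨h1, h2⟩ h⟩
    choose r hr using hexists'
    set R : (S₁ → S₂ → ℝ) → (S₁ → ℝ) → (S₂ → ℝ) :=
      fun u' x => if x = xn then Rn u' else r u' x with hRdef
    have hRx : ∀ u' x, R u' x = if x = xn then Rn u' else r u' x := fun _ _ => rfl
    have hRprop : ∀ u' ∈ narrowSet P u₁ c₁ c₂, ∀ x ∈ stdSimplex ℝ S₁,
        R u' x ∈ stdSimplex ℝ S₂ ∧
          ∀ y ∈ stdSimplex ℝ S₂, Pp P u' c₂ x (R u' x) ≤ Pp P u' c₂ x y := by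
      intro u' hu' x hx
      rw [hRx u' x]
      by_cases hxx : x = xn
      · subst hxx
        rw [if_pos rfl]
        exact hRn u' hu'
      · rw [if_neg hxx]
        exact hr u' x hu' hx
    have hVs := hattain R hRprop
    have hRxn : ∀ u', R u' xn = Rn u' := fun u' => by rw [hRx u' xn, if_pos rfl]
    have hseteq : {w : ℝ | ∃ u' ∈ narrowSet P u₁ c₁ c₂, w = Pm P u' c₂ xn (R u' xn)}
        = {z : ℝ | ∃ u' ∈ narrowSet P u₁ c₁ c₂, z = Pm P u' c₂ xn (Rn u')} := by
      ext z
      constructor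
      · rintro ⟨u', hu', rfl⟩
        exact ⟨u', hu', by rw [hRxn u']⟩
      · rintro ⟨u', hu', rfl⟩
        exact ⟨u', hu', by rw [hRxn u']⟩
    have hup : sInf {z : ℝ | ∃ u' ∈ narrowSet P u₁ c₁ c₂, z = Pm P u' c₂ xn (Rn u')} ≤ Vh := by
      rw [← hseteq, hVs]
      refine le_csSup ⟨b, ?_⟩ ⟨xn, hxn, rfl⟩
      rintro z ⟨x', hx', rfl⟩
      exact hgup (fun u' => R u' x') (fun u' hu' => (hRprop u' hu' x' hx').1) x' hx'
    exact le_antisymm hup hlow
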